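/- The number of bars in a Gauss diagram of a twisted knot is invariant modulo 2 under all extended Reidemeister moves and all forbidden moves T4, F1, F2, F3, F4, Fs, Fo, Fu, Fv. Consequently, a twisted knot Gauss diagram with an odd number of bars cannot be transformed into the empty (bar-free trivial) diagram by any sequence of these moves. -/
import Mathlib


/-- Symbols of a Gauss word: over/under passages of a crossing with a sign,
and a bar. -/
inductive GSym : Type
  | O : ℕ → Bool → GSym
  | U : ℕ → Bool → GSym
  | bar : GSym
  deriving DecidableEq

open GSym

/-- Rotation of a cyclic word. -/
def Rot (w w' : List GSym) : Prop := ∃ a t, w = a :: t ∧ w' = t ++ [a]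

/-- Equivalence generated by a set of local moves together with rotation
(words are cyclic). -/
def MovesEquiv (S : List GSym → List GSym → Prop) : List GSym → List GSym → Prop :=
  Relation.EqvGen (fun w w' => S w w' ∨ Rot w w')

/-- A Gauss word of a twisted knot: each chord label occurs exactly once as `O`
and once as `U`, with a common sign. -/
def IsGaussWord (w : List GSym) : Prop :=
  ∀ i s, (O i s ∈ w ∨ U i s ∈ w) →
    w.count (O i s) = 1 ∧ w.count (U i s) = 1 ∧ ∀ t, t ≠ s → O i t ∉ w ∧ U i t ∉ w

/-- R1: delete an adjacent pair of endpoints of one chord. -/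
def StepR1 (w w' : List GSym) : Prop :=
  ∃ l r i s, (w = l ++ O i s :: U i s :: r ∨ w = l ++ U i s :: O i s :: r) ∧ w' = l ++ r

/-- R2: delete two parallel adjacent chords of opposite signs. -/
def StepR2 (w w' : List GSym) : Prop :=
  ∃ l m r i j s, i ≠ j ∧
    w = l ++ O i s :: O j (!s) :: m ++ U j (!s) :: U i s :: r ∧ w' = l ++ m ++ r

/-- R3: the triangle move on three mutually adjacent chord endpoints (one variant). -/
def StepR3 (w w' : List GSym) : Prop :=
  ∃ l m n r i j k s t u, i ≠ j ∧ j ≠ k ∧ i ≠ k ∧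
    w = l ++ U i s :: U j t :: m ++ O i s :: U k u :: n ++ O j t :: O k u :: r ∧
    w' = l ++ U j t :: U i s :: m ++ U k u :: O i s :: n ++ O k u :: O j t :: r

/-- T2: delete an adjacent pair of bars. -/
def StepT2 (w w' : List GSym) : Prop :=
  ∃ l r, w = l ++ bar :: bar :: r ∧ w' = l ++ r

/-- T3: push a chord across two bars, reversing its sign. -/
def StepT3 (w w' : List GSym) : Prop :=
  ∃ l m r i s,
    w = l ++ O i s :: bar :: m ++ U i s :: bar :: r ∧
    w' = l ++ bar :: O i (!s) :: m ++ bar :: U i (!s) :: r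

/-- T4: delete the two endpoints of a chord separated by a single bar
(the bar remains). -/
def StepT4 (w w' : List GSym) : Prop :=
  ∃ l r i s, (w = l ++ O i s :: bar :: U i s :: r ∨ w = l ++ U i s :: bar :: O i s :: r) ∧
    w' = l ++ bar :: r

/-- F1: swap two adjacent arrowheads. -/
def StepF1 (w w' : List GSym) : Prop :=
  ∃ l r i j s t, i ≠ j ∧ w = l ++ U i s :: U j t :: r ∧ w' = l ++ U j t :: U i s :: r

/-- F2: swap two adjacent arrowtails. -/
def StepF2 (w w' : List GSym) : Prop :=
  ∃ l r i j s t, i ≠ j ∧ w = l ++ O i s :: O j t :: r ∧ w' = l ++ O j t :: O i s :: r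

/-- F3: swap two arrowheads separated by a bar. -/
def StepF3 (w w' : List GSym) : Prop :=
  ∃ l r i j s t, i ≠ j ∧ w = l ++ U i s :: bar :: U j t :: r ∧
    w' = l ++ U j t :: bar :: U i s :: r

/-- F4: swap two arrowtails separated by a bar. -/
def StepF4 (w w' : List GSym) : Prop :=
  ∃ l r i j s t, i ≠ j ∧ w = l ++ O i s :: bar :: O j t :: r ∧
    w' = l ++ O j t :: bar :: O i s :: r

/-- Fs: swap an adjacent arrowhead and arrowtail of the same sign. -/
def StepFs (w w' : List GSym) : Prop :=
  ∃ l r i j s, i ≠ j ∧ w = l ++ U i s :: O j s :: r ∧ w' = l ++ O j s :: U i s :: r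

/-- Fo: swap an adjacent arrowhead and arrowtail of opposite signs. -/
def StepFo (w w' : List GSym) : Prop :=
  ∃ l r i j s, i ≠ j ∧ w = l ++ U i s :: O j (!s) :: r ∧ w' = l ++ O j (!s) :: U i s :: r

/-- Fu: move an arrowhead past a bar and an adjacent arrowtail. -/
def StepFu (w w' : List GSym) : Prop :=
  ∃ l r i j s t, i ≠ j ∧ w = l ++ U i s :: bar :: O j t :: r ∧
    w' = l ++ O j t :: bar :: U i s :: r

/-- Fv: move an arrowtail past a bar and an adjacent arrowhead. -/
def StepFv (w w' : List GSym) : Prop :=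
  ∃ l r i j s t, i ≠ j ∧ w = l ++ O j t :: bar :: U i s :: r ∧
    w' = l ++ U i s :: bar :: O j t :: r

open GSym in
lemma step_bar_parity {w w' : List GSym}
    (h : (StepR1 w w' ∨ StepR2 w w' ∨ StepR3 w w' ∨ StepT2 w w' ∨
        StepT3 w w' ∨ StepT4 w w' ∨ StepF1 w w' ∨ StepF2 w w' ∨ StepF3 w w' ∨
        StepF4 w w' ∨ StepFs w w' ∨ StepFo w w' ∨ StepFu w w' ∨ StepFv w w') ∨ Rot w w') :
    w.count GSym.bar % 2 = w'.count GSym.bar % 2 := by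
  rcases h with (h|h|h|h|h|h|h|h|h|h|h|h|h|h) | h
  · obtain ⟨l, r, i, s, (rfl|rfl), rfl⟩ := h <;>
      simp [List.count_append, List.count_cons]
  · obtain ⟨l, m, r, i, j, s, -, rfl, rfl⟩ := h
    simp [List.count_append, List.count_cons]
  · obtain ⟨l, m, n, r, i, j, k, s, t, u, -, -, -, rfl, rfl⟩ := h
    simp [List.count_append, List.count_cons]
  · obtain ⟨l, r, rfl, rfl⟩ := h
    simp [List.count_append, List.count_cons, Nat.add_mod]; omega
  · obtain ⟨l, m, r, i, s, rfl, rfl⟩ := h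
    simp [List.count_append, List.count_cons]
  · obtain ⟨l, r, i, s, (rfl|rfl), rfl⟩ := h <;>
      simp [List.count_append, List.count_cons]
  · obtain ⟨l, r, i, j, s, t, -, rfl, rfl⟩ := h
    simp [List.count_append, List.count_cons]
  · obtain ⟨l, r, i, j, s, t, -, rfl, rfl⟩ := h
    simp [List.count_append, List.count_cons]
  · obtain ⟨l, r, i, j, s, t, -, rfl, rfl⟩ := h
    simp [List.count_append, List.count_cons]
  · obtain ⟨l, r, i, j, s, t, -, rfl, rfl⟩ := h
    simp [List.count_append, List.count_cons]
  · obtain ⟨l, r, i, j, s, -, rfl, rfl⟩ := h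
    simp [List.count_append, List.count_cons]
  · obtain ⟨l, r, i, j, s, -, rfl, rfl⟩ := h
    simp [List.count_append, List.count_cons]
  · obtain ⟨l, r, i, j, s, t, -, rfl, rfl⟩ := h
    simp [List.count_append, List.count_cons]
  · obtain ⟨l, r, i, j, s, t, -, rfl, rfl⟩ := h
    simp [List.count_append, List.count_cons]
  · obtain ⟨a, t, rfl, rfl⟩ := h
    simp [List.count_append, List.count_cons]

open GSym in
/-- The parity of the number of bars is invariant under all extended
Reidemeister moves and all forbidden moves; consequently a twisted-knot Gauss
word with an odd number of bars cannot be transformed into the empty word. -/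
theorem bar_parity_invariant :
    (∀ w w' : List GSym,
      MovesEquiv (fun x y => StepR1 x y ∨ StepR2 x y ∨ StepR3 x y ∨ StepT2 x y ∨
        StepT3 x y ∨ StepT4 x y ∨ StepF1 x y ∨ StepF2 x y ∨ StepF3 x y ∨
        StepF4 x y ∨ StepFs x y ∨ StepFo x y ∨ StepFu x y ∨ StepFv x y) w w' →
      w.count GSym.bar % 2 = w'.count GSym.bar % 2) ∧
    (∀ w : List GSym, IsGaussWord w → w.count GSym.bar % 2 = 1 →
      ¬ MovesEquiv (fun x y => StepR1 x y ∨ StepR2 x y ∨ StepR3 x y ∨ StepT2 x y ∨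
        StepT3 x y ∨ StepT4 x y ∨ StepF1 x y ∨ StepF2 x y ∨ StepF3 x y ∨
        StepF4 x y ∨ StepFs x y ∨ StepFo x y ∨ StepFu x y ∨ StepFv x y) w
        ([] : List GSym)) := by
  have main : ∀ w w' : List GSym,
      MovesEquiv (fun x y => StepR1 x y ∨ StepR2 x y ∨ StepR3 x y ∨ StepT2 x y ∨
        StepT3 x y ∨ StepT4 x y ∨ StepF1 x y ∨ StepF2 x y ∨ StepF3 x y ∨
        StepF4 x y ∨ StepFs x y ∨ StepFo x y ∨ StepFu x y ∨ StepFv x y) w w' →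
      w.count GSym.bar % 2 = w'.count GSym.bar % 2 := by
    intro w w' h
    induction h with
    | rel a b hab => exact step_bar_parity hab
    | refl => rfl
    | symm _ _ _ ih => exact ih.symm
    | trans _ _ _ _ _ ih1 ih2 => exact ih1.trans ih2
  refine ⟨main, fun w _ hodd hm => ?_⟩
  have := main w [] hm
  simp [hodd] at this
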